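/- Let G be a subcubic graph (maximum degree at most 3) and let {A, B} be a partition of V(G) with |A| < |B| such that every connected component of each induced subgraph G[A] and G[B] is a path on at most 3 vertices. Then R(G) ≤ √2; more precisely, λ_H(G) ≤ √2 and λ_L(G) ≥ −√2. -/

import Mathlib

open Polynomial in
/-- `μ` is the sequence of adjacency eigenvalues of `G`, listed with multiplicity
in decreasing order (so `μ ⟨i-1,_⟩` is the `i`-th largest eigenvalue `λ_i`). -/
def SimpleGraph.IsEigenvalueSeq {V : Type*} [Fintype V] [DecidableEq V]
    (G : SimpleGraph V) (μ : Fin (Fintype.card V) → ℝ) : Prop :=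
  Antitone μ ∧
    (letI : DecidableRel G.Adj := Classical.decRel _
     (SimpleGraph.adjMatrix ℝ G).charpoly) =
      ∏ i : Fin (Fintype.card V), (X - C (μ i))

/-- Every connected component of the subgraph of `G` induced on `A` is a path on at
most 3 vertices (i.e. a path of length at most 2). -/
def SimpleGraph.IsNiceSide {V : Type*} (G : SimpleGraph V) (A : Set V) : Prop :=
  ∀ c : (G.induce A).ConnectedComponent,
    ∃ m : ℕ, m ≤ 3 ∧ Nonempty ((G.induce A).induce c.supp ≃g SimpleGraph.pathGraph m)

/-- `{A, B}` is a nice partition of `V(G)`: it is a partition of the vertex set and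
every connected component of each of the induced subgraphs `G[A]`, `G[B]` is a path
on at most 3 vertices. -/
def SimpleGraph.IsNicePartition {V : Type*} (G : SimpleGraph V) (A B : Set V) : Prop :=
  A ∪ B = Set.univ ∧ A ∩ B = ∅ ∧ G.IsNiceSide A ∧ G.IsNiceSide B

namespace HLIndexAux

open Finset Polynomial Matrix Module

/-! ### Elementary inequality for paths -/

lemma key3 (a b c : ℝ) : 2*a*b + 2*b*c ≤ Real.sqrt 2 * (a^2+b^2+c^2) := by
  have h2 : Real.sqrt 2 * Real.sqrt 2 = 2 := Real.mul_self_sqrt (by norm_num)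
  have h0 : 0 ≤ Real.sqrt 2 := Real.sqrt_nonneg 2
  nlinarith [sq_nonneg (Real.sqrt 2 * b - a - c), sq_nonneg (a - c), sq_nonneg (a + c),
    sq_nonneg b, mul_nonneg h0 (sq_nonneg (a-c)), mul_nonneg h0 (sq_nonneg (a+c)),
    mul_nonneg h0 (sq_nonneg b)]

open scoped Classical in
lemma path_quad (m : ℕ) (hm : m ≤ 3) (z : Fin m → ℝ) :
    |∑ i, ∑ j, (if (SimpleGraph.pathGraph m).Adj i j then z i * z j else 0)|
      ≤ Real.sqrt 2 * ∑ i, z i ^ 2 := by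
  have h0 : 0 ≤ Real.sqrt 2 := Real.sqrt_nonneg 2
  interval_cases m
  · simp
  · simp only [Fin.sum_univ_succ, Fin.sum_univ_zero, SimpleGraph.pathGraph_adj]
    norm_num
    positivity
  · rw [abs_le]
    simp only [Fin.sum_univ_succ, Fin.sum_univ_zero, SimpleGraph.pathGraph_adj]
    norm_num [Fin.ext_iff]
    constructor
    · nlinarith [key3 (-(z 0)) (z 1) 0]
    · nlinarith [key3 (z 0) (z 1) 0]
  · rw [abs_le]
    simp only [Fin.sum_univ_succ, Fin.sum_univ_zero, SimpleGraph.pathGraph_adj]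
    norm_num [Fin.ext_iff]
    constructor
    · nlinarith [key3 (-(z 0)) (z 1) (-(z 2))]
    · nlinarith [key3 (z 0) (z 1) (z 2)]

/-! ### Quadratic form bound for graphs whose components are short paths -/

open scoped Classical in
lemma quad_of_components {W : Type*} [Fintype W] (H : SimpleGraph W)
    (hH : ∀ c : H.ConnectedComponent, ∃ m : ℕ, m ≤ 3 ∧
      Nonempty ((H.induce c.supp) ≃g SimpleGraph.pathGraph m))
    (y : W → ℝ) :
    |∑ p, ∑ q, (if H.Adj p q then y p * y q else 0)| ≤ Real.sqrt 2 * ∑ p, y p ^ 2 := by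
  haveI : Fintype H.ConnectedComponent := Fintype.ofFinite _
  set cmp : W → H.ConnectedComponent := H.connectedComponentMk with hcmp
  have hcomp : ∀ c : H.ConnectedComponent,
      |∑ p ∈ univ.filter (fun p => cmp p = c), ∑ q ∈ univ.filter (fun q => cmp q = c),
          (if H.Adj p q then y p * y q else 0)|
        ≤ Real.sqrt 2 * ∑ p ∈ univ.filter (fun p => cmp p = c), y p ^ 2 := by
    intro c
    obtain ⟨m, hm3, ⟨e⟩⟩ := hH c
    have hmem : ∀ p : W, p ∈ univ.filter (fun p => cmp p = c) ↔ p ∈ c.supp := by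
      intro p; simp [SimpleGraph.ConnectedComponent.mem_supp_iff, hcmp]
    have hadj : ∀ (i j : Fin m),
        H.Adj (e.symm i).1 (e.symm j).1 ↔ (SimpleGraph.pathGraph m).Adj i j := by
      intro i j
      rw [← e.symm.map_adj_iff]
      rfl
    have h1 : ∑ p ∈ univ.filter (fun p => cmp p = c), ∑ q ∈ univ.filter (fun q => cmp q = c),
          (if H.Adj p q then y p * y q else 0)
        = ∑ i : Fin m, ∑ j : Fin m,
            (if (SimpleGraph.pathGraph m).Adj i j then y (e.symm i).1 * y (e.symm j).1 else 0) := by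
      rw [Finset.sum_subtype _ hmem (fun p => ∑ q ∈ univ.filter (fun q => cmp q = c),
            (if H.Adj p q then y p * y q else 0))]
      rw [← Equiv.sum_comp e.symm.toEquiv]
      simp only [RelIso.coe_fn_toEquiv]
      apply Finset.sum_congr rfl
      intro i _
      rw [Finset.sum_subtype _ hmem
        (fun q => if H.Adj (e.symm i).1 q then y (e.symm i).1 * y q else 0)]
      rw [← Equiv.sum_comp e.symm.toEquiv]
      simp only [RelIso.coe_fn_toEquiv]
      apply Finset.sum_congr rfl
      intro j _
      simp_rw [hadj]
    have h2 : ∑ p ∈ univ.filter (fun p => cmp p = c), y p ^ 2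
        = ∑ i : Fin m, y (e.symm i).1 ^ 2 := by
      rw [Finset.sum_subtype _ hmem (fun p => y p ^ 2)]
      rw [← Equiv.sum_comp e.symm.toEquiv]
      simp only [RelIso.coe_fn_toEquiv]
    rw [h1, h2]
    exact path_quad m hm3 _
  have hsame : ∀ p q, H.Adj p q → cmp p = cmp q := fun p q h =>
    SimpleGraph.ConnectedComponent.connectedComponentMk_eq_of_adj h
  have hLHS : ∑ p, ∑ q, (if H.Adj p q then y p * y q else 0)
      = ∑ c : H.ConnectedComponent, ∑ p ∈ univ.filter (fun p => cmp p = c),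
          ∑ q ∈ univ.filter (fun q => cmp q = c), (if H.Adj p q then y p * y q else 0) := by
    rw [← Finset.sum_fiberwise univ cmp (fun p => ∑ q, (if H.Adj p q then y p * y q else 0))]
    apply Finset.sum_congr rfl
    intro c _
    apply Finset.sum_congr rfl
    intro p hp
    simp only [mem_filter, mem_univ, true_and] at hp
    symm
    apply Finset.sum_subset (Finset.subset_univ _)
    intro q _ hq
    simp only [mem_filter, mem_univ, true_and] at hq
    rw [if_neg]
    intro hadj
    exact hq ((hsame q p hadj.symm).trans hp)
  have hRHS : ∑ p, y p ^ 2
      = ∑ c : H.ConnectedComponent, ∑ p ∈ univ.filter (fun p => cmp p = c), y p ^ 2 :=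
    (Finset.sum_fiberwise univ cmp (fun p => y p ^ 2)).symm
  rw [hLHS, hRHS, Finset.mul_sum]
  exact (Finset.abs_sum_le_sum_abs _ _).trans (Finset.sum_le_sum fun c _ => hcomp c)

open scoped Classical in
lemma niceSide_quad {V : Type*} [Fintype V] (G : SimpleGraph V)
    (B : Set V) (hB : G.IsNiceSide B) (x : V → ℝ) (hx : ∀ v, v ∉ B → x v = 0) :
    |∑ v, ∑ u, (if G.Adj v u then x v * x u else 0)| ≤ Real.sqrt 2 * ∑ v, x v ^ 2 := by
  haveI : Fintype ↥B := Fintype.ofFinite _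
  have hBmem : ∀ v : V, v ∈ B.toFinset ↔ v ∈ B := fun v => Set.mem_toFinset
  have hout : ∑ v, ∑ u, (if G.Adj v u then x v * x u else 0)
      = ∑ p : ↥B, ∑ q : ↥B, (if G.Adj p.1 q.1 then x p.1 * x q.1 else 0) := by
    rw [← Finset.sum_subtype B.toFinset hBmem
      (fun v => ∑ q : ↥B, (if G.Adj v q.1 then x v * x q.1 else 0))]
    rw [← Finset.sum_subset (Finset.subset_univ B.toFinset)]
    · apply Finset.sum_congr rfl
      intro v _
      rw [← Finset.sum_subtype B.toFinset hBmem (fun u => if G.Adj v u then x v * x u else 0)]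
      symm
      apply Finset.sum_subset (Finset.subset_univ B.toFinset)
      intro u _ hu
      rw [Set.mem_toFinset] at hu
      simp [hx u hu]
    · intro v _ hv
      rw [Set.mem_toFinset] at hv
      simp [hx v hv]
  have hout2 : ∑ v, x v ^ 2 = ∑ p : ↥B, x p.1 ^ 2 := by
    rw [← Finset.sum_subtype B.toFinset hBmem (fun v => x v ^ 2)]
    symm
    apply Finset.sum_subset (Finset.subset_univ B.toFinset)
    intro v _ hv
    rw [Set.mem_toFinset] at hv
    simp [hx v hv]
  rw [hout, hout2]
  have := quad_of_components (G.induce B) hB (fun p => x p.1)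
  exact this

/-! ### Spectral theory: characteristic polynomial and eigenvalue counting -/

variable {V : Type*} [Fintype V] [DecidableEq V]

lemma charpoly_conj (P Q D : Matrix V V ℝ) (h1 : P * Q = 1) :
    (P * D * Q).charpoly = D.charpoly := by
  set f : Matrix V V ℝ →+* Matrix V V ℝ[X] := (C : ℝ →+* ℝ[X]).mapMatrix with hf
  have hPQ : f P * f Q = 1 := by rw [← _root_.map_mul, h1, _root_.map_one]
  have hchar : charmatrix (P * D * Q) = f P * charmatrix D * f Q := by
    have e1 : f P * charmatrix D * f Q
        = f P * Matrix.scalar V (X : ℝ[X]) * f Q - f P * f D * f Q := by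
      rw [charmatrix, Matrix.mul_sub, Matrix.sub_mul]
    have e2 : f P * Matrix.scalar V (X : ℝ[X]) * f Q = Matrix.scalar V (X : ℝ[X]) := by
      have hs := (Matrix.scalar_commute (X : ℝ[X]) (fun r => Commute.all _ _) (f P)).eq
      rw [← hs, Matrix.mul_assoc, hPQ, Matrix.mul_one]
    have e3 : f P * f D * f Q = f (P * D * Q) := by
      rw [_root_.map_mul, _root_.map_mul]
    rw [e1, e2, e3, charmatrix]
  have hdet : det (f P) * det (f Q) = 1 := by rw [← det_mul, hPQ, det_one]
  calc (P * D * Q).charpoly = det (f P * charmatrix D * f Q) := by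
        rw [Matrix.charpoly, hchar]
    _ = det (charmatrix D) * (det (f P) * det (f Q)) := by rw [det_mul, det_mul]; ring
    _ = D.charpoly := by rw [hdet, mul_one, Matrix.charpoly]

lemma charpoly_eq_prod_eigen (M : Matrix V V ℝ) (hM : M.IsHermitian) :
    M.charpoly = ∏ i : V, (X - C (hM.eigenvalues i)) := by
  have hdiag : (Matrix.diagonal (RCLike.ofReal ∘ hM.eigenvalues) : Matrix V V ℝ)
      = Matrix.diagonal hM.eigenvalues := by
    congr 1
  have h1 : ((hM.eigenvectorUnitary : Matrix V V ℝ))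
      * (star (hM.eigenvectorUnitary : Matrix V V ℝ)) = 1 :=
    (Matrix.mem_unitaryGroup_iff).mp hM.eigenvectorUnitary.2
  have hcm : charmatrix (Matrix.diagonal hM.eigenvalues)
      = Matrix.diagonal (fun i => (X : ℝ[X]) - C (hM.eigenvalues i)) := by
    ext i j
    by_cases h : i = j
    · subst h; simp
    · simp [charmatrix_apply, Matrix.diagonal_apply_ne _ h]
  calc M.charpoly
      = ((hM.eigenvectorUnitary : Matrix V V ℝ) * Matrix.diagonal hM.eigenvalues
          * star (hM.eigenvectorUnitary : Matrix V V ℝ)).charpoly := by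
        conv_lhs => rw [hM.spectral_theorem]
        rw [hdiag]
        rfl
    _ = (Matrix.diagonal hM.eigenvalues).charpoly := charpoly_conj _ _ _ h1
    _ = ∏ i : V, (X - C (hM.eigenvalues i)) := by
        rw [Matrix.charpoly, hcm, det_diagonal]

omit [DecidableEq V] in
lemma repr_zero_of_mem_span (b : OrthonormalBasis V ℝ (EuclideanSpace ℝ V)) (T : Finset V)
    (x : EuclideanSpace ℝ V) (hx : x ∈ Submodule.span ℝ (Set.range fun i : T => b i))
    {j : V} (hj : j ∉ T) : b.repr x j = 0 := by
  rw [b.repr_apply_apply]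
  induction hx using Submodule.span_induction with
  | mem y hy =>
      obtain ⟨i, rfl⟩ := hy
      exact b.orthonormal.2 (fun h : j = (i : V) => hj (h ▸ i.2))
  | zero => simp
  | add y z _ _ hy hz => rw [inner_add_right, hy, hz, add_zero]
  | smul a y _ hy => rw [inner_smul_right, hy, mul_zero]

omit [DecidableEq V] in
lemma sum_sq_repr (b : OrthonormalBasis V ℝ (EuclideanSpace ℝ V)) (x : EuclideanSpace ℝ V) :
    ∑ v, x v ^ 2 = ∑ i, b.repr x i ^ 2 := by
  have h := b.repr.inner_map_map x x
  rw [PiLp.inner_apply, PiLp.inner_apply] at h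
  simp only [RCLike.inner_apply, starRingEnd_apply, star_trivial] at h
  simpa [sq] using h.symm

lemma herm_quad (M : Matrix V V ℝ) (hM : M.IsHermitian) (x : EuclideanSpace ℝ V) :
    ∑ v, x v * (M *ᵥ x) v = ∑ i, hM.eigenvalues i * (hM.eigenvectorBasis.repr x i) ^ 2 := by
  have hsym := (Matrix.isHermitian_iff_isSymmetric).1 hM
  set b := hM.eigenvectorBasis with hb
  have hMx : ∀ i, b.repr (Matrix.toEuclideanLin M x) i = hM.eigenvalues i * b.repr x i := by
    intro i
    rw [b.repr_apply_apply, b.repr_apply_apply, ← hsym (b i) x]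
    have hbi : Matrix.toEuclideanLin M (b i) = hM.eigenvalues i • (b i) :=
      by rw [Matrix.toEuclideanLin_apply, hM.mulVec_eigenvectorBasis i]; rfl
    rw [hbi, inner_smul_left]
    simp [starRingEnd_apply]
  have hL : (inner ℝ x (Matrix.toEuclideanLin M x) : ℝ) = ∑ v, x v * (M *ᵥ x) v := by
    rw [PiLp.inner_apply]
    simp only [RCLike.inner_apply, starRingEnd_apply, star_trivial]
    exact Finset.sum_congr rfl fun v _ => mul_comm _ _
  have hR : (inner ℝ x (Matrix.toEuclideanLin M x) : ℝ)
      = ∑ i, hM.eigenvalues i * (b.repr x i) ^ 2 := by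
    rw [← b.repr.inner_map_map x (Matrix.toEuclideanLin M x), PiLp.inner_apply]
    simp only [RCLike.inner_apply, starRingEnd_apply, star_trivial]
    apply Finset.sum_congr rfl
    intro i _
    rw [hMx i]; ring
  rw [← hL, hR]

omit [DecidableEq V] in
lemma exists_ne_zero_mem_inf (W U : Submodule ℝ (EuclideanSpace ℝ V))
    (h : Fintype.card V < finrank ℝ W + finrank ℝ U) :
    ∃ x : EuclideanSpace ℝ V, x ≠ 0 ∧ x ∈ W ∧ x ∈ U := by
  have hfin : finrank ℝ (EuclideanSpace ℝ V) = Fintype.card V := finrank_euclideanSpace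
  have hsup := Submodule.finrank_sup_add_finrank_inf_eq W U
  have h1 : finrank ℝ ↥(W ⊔ U) ≤ Fintype.card V := hfin ▸ Submodule.finrank_le _
  have h2 : 0 < finrank ℝ ↥(W ⊓ U) := by omega
  have hne : W ⊓ U ≠ ⊥ := by
    intro hbot
    rw [hbot, finrank_bot] at h2
    exact lt_irrefl 0 h2
  obtain ⟨x, hx, hx0⟩ := Submodule.exists_mem_ne_zero_of_ne_bot hne
  exact ⟨x, hx0, hx.1, hx.2⟩

omit [DecidableEq V] in
lemma finrank_span_orthonormal {b : V → EuclideanSpace ℝ V} (hb : Orthonormal ℝ b)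
    (T : Finset V) :
    finrank ℝ ↥(Submodule.span ℝ (Set.range fun i : T => b i)) = T.card := by
  rw [show (Set.range fun i : T => b ↑i) = Set.range (b ∘ (Subtype.val : T → V)) from rfl,
    finrank_span_eq_card ((hb.linearIndependent).comp _ Subtype.val_injective)]
  exact Fintype.card_coe T

open scoped Classical in
lemma count_eig_gt (M : Matrix V V ℝ) (hM : M.IsHermitian) (S : Finset V) (c : ℝ)
    (hq : ∀ x : EuclideanSpace ℝ V, (∀ v, v ∉ S → x v = 0) →
      ∑ v, x v * (M *ᵥ x) v ≤ c * ∑ v, x v ^ 2) :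
    (univ.filter fun i => c < hM.eigenvalues i).card + S.card ≤ Fintype.card V := by
  by_contra hcon
  push_neg at hcon
  set b := hM.eigenvectorBasis with hb
  set T := univ.filter fun i => c < hM.eigenvalues i with hT
  set W := Submodule.span ℝ (Set.range fun i : T => b i) with hW
  set U := Submodule.span ℝ (Set.range fun v : S => (EuclideanSpace.basisFun V ℝ) v) with hU
  have hWrank : finrank ℝ ↥W = T.card := finrank_span_orthonormal b.orthonormal T
  have hUrank : finrank ℝ ↥U = S.card :=
    finrank_span_orthonormal (EuclideanSpace.basisFun V ℝ).orthonormal S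
  obtain ⟨x, hx0, hxW, hxU⟩ := exists_ne_zero_mem_inf W U (by rw [hWrank, hUrank]; omega)
  have hsupp : ∀ v, v ∉ S → x v = 0 := by
    intro v hv
    have := repr_zero_of_mem_span (EuclideanSpace.basisFun V ℝ) S x hxU hv
    rwa [EuclideanSpace.basisFun_repr] at this
  have hrT : ∀ j, j ∉ T → b.repr x j = 0 := fun j hj => repr_zero_of_mem_span b T x hxW hj
  have hex : ∃ i0, b.repr x i0 ≠ 0 := by
    by_contra hall
    push_neg at hall
    apply hx0
    have hz : b.repr x = 0 := by
      ext i
      exact hall i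
    exact b.repr.map_eq_zero_iff.mp hz
  obtain ⟨i0, hi0⟩ := hex
  have hi0T : i0 ∈ T := by
    by_contra h
    exact hi0 (hrT _ h)
  have hstrict : c * ∑ i, b.repr x i ^ 2 < ∑ i, hM.eigenvalues i * b.repr x i ^ 2 := by
    rw [Finset.mul_sum]
    apply Finset.sum_lt_sum
    · intro i _
      by_cases hiT : i ∈ T
      · have hci : c < hM.eigenvalues i := by
          rw [hT] at hiT
          exact (Finset.mem_filter.mp hiT).2
        exact mul_le_mul_of_nonneg_right hci.le (sq_nonneg _)
      · rw [hrT i hiT]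
        simp
    · refine ⟨i0, Finset.mem_univ _, ?_⟩
      have hci : c < hM.eigenvalues i0 := by
        rw [hT] at hi0T
        exact (Finset.mem_filter.mp hi0T).2
      have hpos : 0 < b.repr x i0 ^ 2 := by positivity
      exact mul_lt_mul_of_pos_right hci hpos
  have hqx := hq x hsupp
  rw [herm_quad M hM x, sum_sq_repr b x] at hqx
  rw [← hb] at hqx
  linarith

open scoped Classical in
lemma count_eig_lt (M : Matrix V V ℝ) (hM : M.IsHermitian) (S : Finset V) (c : ℝ)
    (hq : ∀ x : EuclideanSpace ℝ V, (∀ v, v ∉ S → x v = 0) →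
      c * ∑ v, x v ^ 2 ≤ ∑ v, x v * (M *ᵥ x) v) :
    (univ.filter fun i => hM.eigenvalues i < c).card + S.card ≤ Fintype.card V := by
  by_contra hcon
  push_neg at hcon
  set b := hM.eigenvectorBasis with hb
  set T := univ.filter fun i => hM.eigenvalues i < c with hT
  set W := Submodule.span ℝ (Set.range fun i : T => b i) with hW
  set U := Submodule.span ℝ (Set.range fun v : S => (EuclideanSpace.basisFun V ℝ) v) with hU
  have hWrank : finrank ℝ ↥W = T.card := finrank_span_orthonormal b.orthonormal T
  have hUrank : finrank ℝ ↥U = S.card :=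
    finrank_span_orthonormal (EuclideanSpace.basisFun V ℝ).orthonormal S
  obtain ⟨x, hx0, hxW, hxU⟩ := exists_ne_zero_mem_inf W U (by rw [hWrank, hUrank]; omega)
  have hsupp : ∀ v, v ∉ S → x v = 0 := by
    intro v hv
    have := repr_zero_of_mem_span (EuclideanSpace.basisFun V ℝ) S x hxU hv
    rwa [EuclideanSpace.basisFun_repr] at this
  have hrT : ∀ j, j ∉ T → b.repr x j = 0 := fun j hj => repr_zero_of_mem_span b T x hxW hj
  have hex : ∃ i0, b.repr x i0 ≠ 0 := by
    by_contra hall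
    push_neg at hall
    apply hx0
    have hz : b.repr x = 0 := by
      ext i
      exact hall i
    exact b.repr.map_eq_zero_iff.mp hz
  obtain ⟨i0, hi0⟩ := hex
  have hi0T : i0 ∈ T := by
    by_contra h
    exact hi0 (hrT _ h)
  have hstrict : ∑ i, hM.eigenvalues i * b.repr x i ^ 2 < c * ∑ i, b.repr x i ^ 2 := by
    rw [Finset.mul_sum]
    apply Finset.sum_lt_sum
    · intro i _
      by_cases hiT : i ∈ T
      · have hci : hM.eigenvalues i < c := by
          rw [hT] at hiT
          exact (Finset.mem_filter.mp hiT).2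
        exact mul_le_mul_of_nonneg_right hci.le (sq_nonneg _)
      · rw [hrT i hiT]
        simp
    · refine ⟨i0, Finset.mem_univ _, ?_⟩
      have hci : hM.eigenvalues i0 < c := by
        rw [hT] at hi0T
        exact (Finset.mem_filter.mp hi0T).2
      have hpos : 0 < b.repr x i0 ^ 2 := by positivity
      exact mul_lt_mul_of_pos_right hci hpos
  have hqx := hq x hsupp
  rw [herm_quad M hM x, sum_sq_repr b x] at hqx
  rw [← hb] at hqx
  linarith

lemma roots_prod_eq {ι : Type*} [Fintype ι] (f : ι → ℝ) :
    (∏ i : ι, (X - C (f i))).roots = Multiset.map f univ.val := by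
  rw [Finset.prod_eq_multiset_prod]
  have : (Multiset.map (fun i => X - C (f i)) univ.val)
      = (Multiset.map f univ.val).map (fun a => X - C a) := by
    rw [Multiset.map_map]
    rfl
  rw [this, Polynomial.roots_multiset_prod_X_sub_C]

end HLIndexAux

open Polynomial Finset Matrix HLIndexAux in
/-- If a subcubic graph `G` has a nice partition `{A, B}` with
`|A| < |B|` (an unbalanced nice partition), then `λ_H(G) ≤ √2` and `λ_L(G) ≥ -√2`,
so `R(G) = max (|λ_H|, |λ_L|) ≤ √2`.  Here `H = ⌊(n+1)/2⌋`, `L = ⌈(n+1)/2⌉`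
(0-indexed positions `(n-1)/2` and `n/2`). -/
theorem hl_index_le_sqrt_two_of_unbalanced_nice_partition
    {V : Type*} [Fintype V] [DecidableEq V] (G : SimpleGraph V) [DecidableRel G.Adj]
    (hdeg : ∀ v : V, G.degree v ≤ 3)
    (A B : Set V) (hnice : G.IsNicePartition A B) (hunbal : A.ncard < B.ncard)
    (μ : Fin (Fintype.card V) → ℝ) (hμ : G.IsEigenvalueSeq μ)
    (H L : Fin (Fintype.card V))
    (hH : (H : ℕ) = (Fintype.card V - 1) / 2) (hL : (L : ℕ) = Fintype.card V / 2) :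
    μ H ≤ Real.sqrt 2 ∧ -Real.sqrt 2 ≤ μ L ∧ max |μ H| |μ L| ≤ Real.sqrt 2 := by
  classical
  obtain ⟨hcover, hdisj', hniceA, hniceB⟩ := hnice
  obtain ⟨hmono, hcp0⟩ := hμ
  have hn0 : 0 < Fintype.card V := H.pos
  have hM : (SimpleGraph.adjMatrix ℝ G).IsHermitian := by
    rw [Matrix.IsHermitian, Matrix.conjTranspose_eq_transpose_of_trivial]
    exact G.isSymm_adjMatrix
  -- identify the two charpoly factorizations
  have hcp : (SimpleGraph.adjMatrix ℝ G).charpoly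
      = ∏ i : Fin (Fintype.card V), (X - C (μ i)) := by
    convert hcp0 using 3
  have hprodν : (SimpleGraph.adjMatrix ℝ G).charpoly = ∏ v : V, (X - C (hM.eigenvalues v)) :=
    charpoly_eq_prod_eigen _ hM
  have hms : Multiset.map μ univ.val = Multiset.map hM.eigenvalues univ.val := by
    rw [← roots_prod_eq μ, ← roots_prod_eq hM.eigenvalues, ← hcp, ← hprodν]
  have hcount : ∀ (p : ℝ → Prop) [DecidablePred p],
      (univ.filter fun i : Fin (Fintype.card V) => p (μ i)).card
        = (univ.filter fun v : V => p (hM.eigenvalues v)).card := by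
    intro p hp
    have h := congrArg (Multiset.countP p) hms
    rw [Multiset.countP_map, Multiset.countP_map] at h
    simpa [Finset.card_def, Finset.filter] using h
  -- cardinalities
  have hAfin : A.Finite := Set.toFinite A
  have hBfin : B.Finite := Set.toFinite B
  have hdisj : Disjoint A B := Set.disjoint_iff_inter_eq_empty.mpr hdisj'
  have hab : A.ncard + B.ncard = Fintype.card V := by
    rw [← Set.ncard_union_eq hdisj hAfin hBfin, hcover, Set.ncard_univ,
      Nat.card_eq_fintype_card]
  set S := hBfin.toFinset with hS
  have hScard : S.card = B.ncard := (Set.ncard_eq_toFinset_card B hBfin).symm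
  -- quadratic form bounds on vectors supported in B
  have hqup : ∀ x : EuclideanSpace ℝ V, (∀ v, v ∉ S → x v = 0) →
      ∑ v, x v * ((SimpleGraph.adjMatrix ℝ G) *ᵥ x) v ≤ Real.sqrt 2 * ∑ v, x v ^ 2 := by
    intro x hx
    have hx' : ∀ v, v ∉ B → x v = 0 := fun v hv =>
      hx v (fun hmem => hv (hBfin.mem_toFinset.mp hmem))
    have hrw : ∑ v, x v * ((SimpleGraph.adjMatrix ℝ G) *ᵥ x) v
        = ∑ v, ∑ u, (@ite ℝ (G.Adj v u) (Classical.propDecidable _) (x v * x u) 0) := by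
      apply Finset.sum_congr rfl
      intro v _
      simp [Matrix.mulVec, dotProduct, SimpleGraph.adjMatrix_apply, Finset.mul_sum,
        mul_ite, ite_mul, mul_one, mul_zero, one_mul, zero_mul]
    rw [hrw]
    refine le_trans (le_abs_self _) ?_
    exact niceSide_quad G B hniceB x hx'
  have hqdown : ∀ x : EuclideanSpace ℝ V, (∀ v, v ∉ S → x v = 0) →
      (-Real.sqrt 2) * ∑ v, x v ^ 2 ≤ ∑ v, x v * ((SimpleGraph.adjMatrix ℝ G) *ᵥ x) v := by
    intro x hx
    have hx' : ∀ v, v ∉ B → x v = 0 := fun v hv =>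
      hx v (fun hmem => hv (hBfin.mem_toFinset.mp hmem))
    have hrw : ∑ v, x v * ((SimpleGraph.adjMatrix ℝ G) *ᵥ x) v
        = ∑ v, ∑ u, (@ite ℝ (G.Adj v u) (Classical.propDecidable _) (x v * x u) 0) := by
      apply Finset.sum_congr rfl
      intro v _
      simp [Matrix.mulVec, dotProduct, SimpleGraph.adjMatrix_apply, Finset.mul_sum,
        mul_ite, ite_mul, mul_one, mul_zero, one_mul, zero_mul]
    rw [hrw]
    have hbd := niceSide_quad G B hniceB x hx'
    have := neg_abs_le (∑ v, ∑ u, (@ite ℝ (G.Adj v u) (Classical.propDecidable _) (x v * x u) 0))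
    linarith
  -- eigenvalue counting bounds
  have hcgt := count_eig_gt (SimpleGraph.adjMatrix ℝ G) hM S (Real.sqrt 2) hqup
  have hclt := count_eig_lt (SimpleGraph.adjMatrix ℝ G) hM S (-Real.sqrt 2) hqdown
  have hc1 : (univ.filter fun i : Fin (Fintype.card V) => Real.sqrt 2 < μ i).card
      ≤ A.ncard := by
    rw [hcount (fun t => Real.sqrt 2 < t)]
    omega
  have hc2 : (univ.filter fun i : Fin (Fintype.card V) => μ i < -Real.sqrt 2).card
      ≤ A.ncard := by
    rw [hcount (fun t => t < -Real.sqrt 2)]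
    omega
  have hA2 : 2 * A.ncard < Fintype.card V := by omega
  -- part 1 : μ H ≤ √2
  have part1 : μ H ≤ Real.sqrt 2 := by
    by_contra h
    push_neg at h
    have hsub : Finset.Iic H ⊆ univ.filter fun j => Real.sqrt 2 < μ j := by
      intro j hj
      exact Finset.mem_filter.mpr ⟨Finset.mem_univ _,
        lt_of_lt_of_le h (hmono (Finset.mem_Iic.mp hj))⟩
    have hcard := Finset.card_le_card hsub
    rw [Fin.card_Iic] at hcard
    omega
  -- part 2 : -√2 ≤ μ L
  have part2 : -Real.sqrt 2 ≤ μ L := by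
    by_contra h
    push_neg at h
    have hsub : Finset.Ici L ⊆ univ.filter fun j => μ j < -Real.sqrt 2 := by
      intro j hj
      exact Finset.mem_filter.mpr ⟨Finset.mem_univ _,
        lt_of_le_of_lt (hmono (Finset.mem_Ici.mp hj)) h⟩
    have hcard := Finset.card_le_card hsub
    rw [Fin.card_Ici] at hcard
    omega
  have hHL : H ≤ L := by
    rw [Fin.le_def]
    omega
  have hLH : μ L ≤ μ H := hmono hHL
  exact ⟨part1, part2, max_le (abs_le.mpr ⟨by linarith, part1⟩)
    (abs_le.mpr ⟨part2, by linarith⟩)⟩
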